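/- Let (Ω, P) be a probability space, T a positive integer, S ⊆ Fin T of size s with α := s/T, H a real inner product space, Z_1, …, Z_T : Ω → H mutually independent square-integrable random variables, γ ∈ [0,1], and c_i ∈ H (i ∈ S) constants with ‖c_i − E[Z_i]‖ ≤ G·(σ+δ) for constants G, σ, δ ≥ 0. For each mask configuration b : S → Bool define Z^b := (1/T)·( Σ_{i∈S} (if b(i) then c_i else Z_i) + Σ_{i∉S} Z_i ), let μ_b := E[Z^b], give configurations the product Bernoulli(γ) weights P(b) := γ^{#{i : b(i)=true}}·(1−γ)^{#{i : b(i)=false}}, and let μ̄ := Σ_b P(b)·μ_b. Then Σ_b P(b)·‖μ_b − μ̄‖² ≤ G²·(σ+δ)²·( (γα)² + α·γ·(1−γ)/T ). -/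

import Mathlib

open MeasureTheory ProbabilityTheory Finset RealInnerProductSpace

lemma aux_sum_prod {ι : Type*} [Fintype ι] [DecidableEq ι] (f : ι → Bool → ℝ) :
    ∑ b : ι → Bool, ∏ i, f i (b i) = ∏ i, (f i false + f i true) := by
  have h := Finset.prod_univ_sum (t := fun _ : ι => (Finset.univ : Finset Bool)) (f := f)
  rw [Fintype.piFinset_univ] at h
  rw [← h]
  congr 1; ext i; simp [Fintype.sum_bool, add_comm]

lemma aux_w_prod {ι : Type*} [Fintype ι] (γ : ℝ) (b : ι → Bool) :
    γ ^ (Finset.univ.filter (fun i => b i = true)).card *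
      (1 - γ) ^ (Finset.univ.filter (fun i => b i = false)).card
    = ∏ i, (if b i then γ else 1 - γ) := by
  rw [Finset.prod_ite]
  simp [Finset.prod_const]

lemma aux_sum_single {ι : Type*} [Fintype ι] [DecidableEq ι] (γ : ℝ) (j : ι) (g : Bool → ℝ) :
    ∑ b : ι → Bool, (∏ i, (if b i then γ else 1 - γ)) * g (b j)
    = (1 - γ) * g false + γ * g true := by
  calc ∑ b : ι → Bool, (∏ i, (if b i then γ else 1 - γ)) * g (b j)
      = ∑ b : ι → Bool, ∏ i, ((if b i then γ else 1 - γ) * (if i = j then g (b i) else 1)) := by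
        apply Finset.sum_congr rfl; intro b _
        rw [Finset.prod_mul_distrib, Finset.prod_ite_eq' Finset.univ j (fun x => g (b x))]
        simp
    _ = ∏ i, ((if (false:Bool) then γ else 1 - γ) * (if i = j then g false else 1) +
          (if (true:Bool) then γ else 1 - γ) * (if i = j then g true else 1)) :=
        aux_sum_prod (fun i x => (if x then γ else 1 - γ) * (if i = j then g x else 1))
    _ = ∏ i, (if i = j then (1 - γ) * g false + γ * g true else 1) := by
        apply Finset.prod_congr rfl; intro i _
        by_cases h : i = j <;> simp [h] <;> ring
    _ = (1 - γ) * g false + γ * g true := by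
        rw [Finset.prod_ite_eq' Finset.univ j (fun _ => (1 - γ) * g false + γ * g true)]
        simp

lemma aux_sum_pair {ι : Type*} [Fintype ι] [DecidableEq ι] (γ : ℝ) {j k : ι} (hjk : j ≠ k)
    (g h : Bool → ℝ) :
    ∑ b : ι → Bool, (∏ i, (if b i then γ else 1 - γ)) * (g (b j) * h (b k))
    = ((1 - γ) * g false + γ * g true) * ((1 - γ) * h false + γ * h true) := by
  calc ∑ b : ι → Bool, (∏ i, (if b i then γ else 1 - γ)) * (g (b j) * h (b k))
      = ∑ b : ι → Bool, ∏ i, ((if b i then γ else 1 - γ) *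
          ((if i = j then g (b i) else 1) * (if i = k then h (b i) else 1))) := by
        apply Finset.sum_congr rfl; intro b _
        rw [Finset.prod_mul_distrib, Finset.prod_mul_distrib,
          Finset.prod_ite_eq' Finset.univ j (fun x => g (b x)),
          Finset.prod_ite_eq' Finset.univ k (fun x => h (b x))]
        simp
    _ = ∏ i, ((if (false:Bool) then γ else 1 - γ) *
          ((if i = j then g false else 1) * (if i = k then h false else 1)) +
          (if (true:Bool) then γ else 1 - γ) *
          ((if i = j then g true else 1) * (if i = k then h true else 1))) :=
        aux_sum_prod (fun i x => (if x then γ else 1 - γ) *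
          ((if i = j then g x else 1) * (if i = k then h x else 1)))
    _ = ∏ i, ((if i = j then (1 - γ) * g false + γ * g true else 1) *
          (if i = k then (1 - γ) * h false + γ * h true else 1)) := by
        apply Finset.prod_congr rfl; intro i _
        by_cases h1 : i = j <;> by_cases h2 : i = k
        · exact absurd (h1 ▸ h2) hjk
        all_goals simp [h1, h2, hjk, Ne.symm hjk] <;> ring
    _ = ((1 - γ) * g false + γ * g true) * ((1 - γ) * h false + γ * h true) := by
        rw [Finset.prod_mul_distrib,
          Finset.prod_ite_eq' Finset.univ j (fun _ => (1 - γ) * g false + γ * g true),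
          Finset.prod_ite_eq' Finset.univ k (fun _ => (1 - γ) * h false + γ * h true)]
        simp

lemma aux_moment {ι : Type*} [Fintype ι] [DecidableEq ι] (γ : ℝ) (j k : ι) :
    ∑ b : ι → Bool, (∏ i, (if b i then γ else 1 - γ)) *
      (((if b j then (1:ℝ) else 0) - γ) * ((if b k then (1:ℝ) else 0) - γ))
    = if j = k then γ * (1 - γ) else 0 := by
  by_cases hjk : j = k
  · subst hjk
    have := aux_sum_single (ι := ι) γ j (fun x => ((if x then (1:ℝ) else 0) - γ) * ((if x then (1:ℝ) else 0) - γ))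
    simp only [this]
    simp; ring
  · rw [aux_sum_pair γ hjk (fun x => (if x then (1:ℝ) else 0) - γ)
      (fun x => (if x then (1:ℝ) else 0) - γ)]
    simp [hjk]; ring


lemma aux_sum_subtype {n : ℕ} (S : Finset (Fin n)) {M : Type*} [AddCommMonoid M]
    (g : {i // i ∈ S} → M) :
    ∑ i : Fin n, (if h : i ∈ S then g ⟨i, h⟩ else 0) = ∑ j : {i // i ∈ S}, g j := by
  have h1 : ∑ i : Fin n, (if h : i ∈ S then g ⟨i, h⟩ else 0)
      = ∑ i ∈ S, (if h : i ∈ S then g ⟨i, h⟩ else 0) :=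
    (Finset.sum_subset (Finset.subset_univ S) (by intro x _ hx; simp [hx])).symm
  rw [h1, ← Finset.sum_attach S fun i => if h : i ∈ S then g ⟨i, h⟩ else 0]
  exact Finset.sum_congr rfl fun x _ => by simp [x.2]



/-- The variance E[‖X − E[X]‖²] of a vector-valued random variable. -/
noncomputable def vecVar {Ω : Type*} [MeasurableSpace Ω] (P : Measure Ω)
    {H : Type*} [NormedAddCommGroup H] [NormedSpace ℝ H] (X : Ω → H) : ℝ :=
  ∫ ω, ‖X ω - ∫ ω', X ω' ∂P‖ ^ 2 ∂P

/-- bound on the variance of the conditional expectation: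
    Σ_b P(b)·‖μ_b − μ̄‖² ≤ G²·(σ+δ)²·((γα)² + α·γ·(1−γ)/T), where μ_b = E[Z^b]
    and μ̄ is the P(b)-weighted average of the μ_b. -/
theorem mask_mean_variance_bound
    {Ω : Type*} [MeasurableSpace Ω] (P : Measure Ω) [IsProbabilityMeasure P]
    (T : ℕ) (hT : 0 < T) (S : Finset (Fin T))
    {H : Type*} [NormedAddCommGroup H] [InnerProductSpace ℝ H] [CompleteSpace H]
    [MeasurableSpace H] [BorelSpace H]
    (Z : Fin T → Ω → H)
    (hZmeas : ∀ i, Measurable (Z i))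
    (hZL2 : ∀ i, MemLp (Z i) 2 P)
    (hZindep : iIndepFun Z P)
    (γ : ℝ) (hγ : γ ∈ Set.Icc (0 : ℝ) 1)
    (G σ δ : ℝ) (hG : 0 ≤ G) (hσ : 0 ≤ σ) (hδ : 0 ≤ δ)
    (c : Fin T → H) (hc : ∀ i ∈ S, ‖c i - ∫ ω, Z i ω ∂P‖ ≤ G * (σ + δ))
    (α : ℝ) (hα : α = (S.card : ℝ) / T)
    (μ : ({i // i ∈ S} → Bool) → H)
    (hμ : ∀ b, μ b = ∫ ω, (T : ℝ)⁻¹ •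
      ∑ i : Fin T, (if h : i ∈ S then (if b ⟨i, h⟩ then c i else Z i ω) else Z i ω) ∂P)
    (w : ({i // i ∈ S} → Bool) → ℝ)
    (hw : ∀ b, w b = γ ^ (Finset.univ.filter (fun i => b i = true)).card *
        (1 - γ) ^ (Finset.univ.filter (fun i => b i = false)).card)
    (μbar : H) (hμbar : μbar = ∑ b : {i // i ∈ S} → Bool, w b • μ b) :
    ∑ b : {i // i ∈ S} → Bool, w b * ‖μ b - μbar‖ ^ 2 ≤
      G ^ 2 * (σ + δ) ^ 2 * ((γ * α) ^ 2 + α * γ * (1 - γ) / T) := by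
  obtain ⟨hγ0, hγ1⟩ := hγ
  set K : ℝ := G * (σ + δ) with hKdef
  have hK : 0 ≤ K := by positivity
  set m : Fin T → H := fun i => ∫ ω, Z i ω ∂P with hm
  set d : {i // i ∈ S} → H := fun j => c j.1 - m j.1 with hd
  have hdK : ∀ j : {i // i ∈ S}, ‖d j‖ ≤ K := fun j => hc j.1 j.2
  have hInt : ∀ i, Integrable (Z i) P := fun i => (hZL2 i).integrable one_le_two
  have hμ' : ∀ b, μ b = (T : ℝ)⁻¹ •
      ∑ i : Fin T, (if h : i ∈ S then (if b ⟨i, h⟩ then c i else m i) else m i) := by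
    intro b
    rw [hμ b, integral_smul]
    congr 1
    rw [integral_finset_sum]
    · exact Finset.sum_congr rfl fun i _ => by
        by_cases h : i ∈ S
        · by_cases hb : b ⟨i, h⟩ <;> simp [h, hb, hm]
        · simp [h, hm]
    · intro i _
      by_cases h : i ∈ S
      · by_cases hb : b ⟨i, h⟩ <;> simp only [h, hb, dif_pos, if_true, if_false]
        · exact integrable_const _
        · exact hInt i
      · simpa [h] using hInt i
  set χ : Bool → ℝ := fun x => if x then 1 else 0 with hχ
  set A : H := (T : ℝ)⁻¹ • ∑ i : Fin T, m i with hA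
  set u : ({i // i ∈ S} → Bool) → H := fun b => ∑ j : {i // i ∈ S}, χ (b j) • d j with hu
  have hdecomp : ∀ b, μ b = A + (T : ℝ)⁻¹ • u b := by
    intro b
    rw [hμ' b]
    have h1 : ∀ i : Fin T, (if h : i ∈ S then (if b ⟨i, h⟩ then c i else m i) else m i)
        = m i + (if h : i ∈ S then χ (b ⟨i, h⟩) • d ⟨i, h⟩ else 0) := by
      intro i
      by_cases h : i ∈ S
      · by_cases hb : b ⟨i, h⟩ <;> simp [h, hb, hχ, hd]
      · simp [h]
    simp only [h1, Finset.sum_add_distrib]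
    rw [aux_sum_subtype S (fun j => χ (b j) • d j), smul_add]
  have hwp : ∀ b, w b = ∏ i : {i // i ∈ S}, (if b i then γ else 1 - γ) :=
    fun b => (hw b).trans (aux_w_prod γ b)
  have hsumw : ∑ b : {i // i ∈ S} → Bool, w b = 1 := by
    simp only [hwp]
    rw [aux_sum_prod (fun (_ : {i // i ∈ S}) x => if x then γ else 1 - γ)]
    simp
  have hmean : ∀ j : {i // i ∈ S}, ∑ b : {i // i ∈ S} → Bool, w b * χ (b j) = γ := by
    intro j
    simp only [hwp]
    rw [aux_sum_single γ j χ]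
    simp [hχ]
  have hμbar' : μbar = A + (T : ℝ)⁻¹ • ∑ j : {i // i ∈ S}, γ • d j := by
    rw [hμbar]
    simp only [hdecomp, smul_add]
    rw [Finset.sum_add_distrib, ← Finset.sum_smul, hsumw, one_smul]
    congr 1
    have hsc : ∀ b : {i // i ∈ S} → Bool, w b • (T : ℝ)⁻¹ • u b = (T : ℝ)⁻¹ • (w b • u b) :=
      fun b => smul_comm _ _ _
    simp only [hsc, ← Finset.smul_sum]
    congr 1
    simp only [hu, Finset.smul_sum]
    rw [Finset.sum_comm]
    exact Finset.sum_congr rfl fun j _ => by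
      rw [← hmean j, Finset.sum_smul]
      exact Finset.sum_congr rfl fun b _ => by rw [smul_smul]
  set e : Bool → ℝ := fun x => χ x - γ with he
  have hdiff : ∀ b, μ b - μbar = (T : ℝ)⁻¹ • ∑ j : {i // i ∈ S}, e (b j) • d j := by
    intro b
    rw [hdecomp b, hμbar']
    rw [add_sub_add_left_eq_sub, ← smul_sub, ← Finset.sum_sub_distrib]
    congr 1
    exact Finset.sum_congr rfl fun j _ => by rw [he]; rw [sub_smul]
  have hnorm : ∀ b, ‖μ b - μbar‖ ^ 2
      = ((T : ℝ)⁻¹) ^ 2 * ∑ j : {i // i ∈ S}, ∑ k : {i // i ∈ S},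
          (e (b j) * e (b k)) * ⟪d j, d k⟫ := by
    intro b
    rw [hdiff b, norm_smul, mul_pow]
    congr 1
    · rw [Real.norm_eq_abs, sq_abs]
    · rw [← real_inner_self_eq_norm_sq, sum_inner]
      refine Finset.sum_congr rfl fun j _ => ?_
      rw [inner_sum]
      refine Finset.sum_congr rfl fun k _ => ?_
      rw [real_inner_smul_left, real_inner_smul_right]
      ring
  have hmom : ∀ j k : {i // i ∈ S}, ∑ b : {i // i ∈ S} → Bool, w b * (e (b j) * e (b k))
      = if j = k then γ * (1 - γ) else 0 := by
    intro j k
    simp only [hwp, he, hχ]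
    exact aux_moment γ j k
  have hmain : ∑ b : {i // i ∈ S} → Bool, w b * ‖μ b - μbar‖ ^ 2
      = ((T : ℝ)⁻¹) ^ 2 * (γ * (1 - γ)) * ∑ j : {i // i ∈ S}, ‖d j‖ ^ 2 := by
    simp only [hnorm]
    have step1 : ∑ b : {i // i ∈ S} → Bool, w b * (((T : ℝ)⁻¹) ^ 2 *
        ∑ j : {i // i ∈ S}, ∑ k : {i // i ∈ S}, (e (b j) * e (b k)) * ⟪d j, d k⟫)
        = ((T : ℝ)⁻¹) ^ 2 * ∑ j : {i // i ∈ S}, ∑ k : {i // i ∈ S},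
          (∑ b : {i // i ∈ S} → Bool, w b * (e (b j) * e (b k))) * ⟪d j, d k⟫ := by
      simp only [Finset.mul_sum, Finset.sum_mul]
      rw [Finset.sum_comm]
      refine Finset.sum_congr rfl fun j _ => ?_
      rw [Finset.sum_comm]
      refine Finset.sum_congr rfl fun k _ => ?_
      refine Finset.sum_congr rfl fun b _ => ?_
      ring
    rw [step1]
    have step2 : ∀ j : {i // i ∈ S}, ∑ k : {i // i ∈ S},
        (∑ b : {i // i ∈ S} → Bool, w b * (e (b j) * e (b k))) * ⟪d j, d k⟫
        = γ * (1 - γ) * ‖d j‖ ^ 2 := by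
      intro j
      simp only [hmom]
      rw [Finset.sum_eq_single j]
      · rw [if_pos rfl, real_inner_self_eq_norm_sq]
      · intro k _ hk; rw [if_neg (Ne.symm hk), zero_mul]
      · intro hj; exact absurd (Finset.mem_univ j) hj
    simp only [step2]
    rw [← Finset.mul_sum]
    ring
  rw [hmain]
  have hsum_d : ∑ j : {i // i ∈ S}, ‖d j‖ ^ 2 ≤ (S.card : ℝ) * K ^ 2 := by
    calc ∑ j : {i // i ∈ S}, ‖d j‖ ^ 2 ≤ ∑ _j : {i // i ∈ S}, K ^ 2 :=
          Finset.sum_le_sum fun j _ => pow_le_pow_left₀ (norm_nonneg _) (hdK j) 2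
      _ = (S.card : ℝ) * K ^ 2 := by
          rw [Finset.sum_const, Finset.card_univ, Fintype.card_coe, nsmul_eq_mul]
  have hT0 : (0:ℝ) < T := by exact_mod_cast hT
  have hγγ : 0 ≤ γ * (1 - γ) := mul_nonneg hγ0 (by linarith)
  have hGK : G ^ 2 * (σ + δ) ^ 2 = K ^ 2 := by rw [hKdef]; ring
  rw [hGK]
  calc ((T : ℝ)⁻¹) ^ 2 * (γ * (1 - γ)) * ∑ j : {i // i ∈ S}, ‖d j‖ ^ 2
      ≤ ((T : ℝ)⁻¹) ^ 2 * (γ * (1 - γ)) * ((S.card : ℝ) * K ^ 2) := by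
        apply mul_le_mul_of_nonneg_left hsum_d
        positivity
    _ = K ^ 2 * (α * γ * (1 - γ) / T) := by
        rw [hα]; field_simp
    _ ≤ K ^ 2 * ((γ * α) ^ 2 + α * γ * (1 - γ) / T) := by
        apply mul_le_mul_of_nonneg_left _ (by positivity)
        have := sq_nonneg (γ * α)
        linarith
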